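/- Let ℓ ≥ 3 be an odd integer, let v ∈ C be a primitive ℓ-th root of unity, and let r be an integer with 0 ≤ r ≤ ℓ. Then in the polynomial ring C[x] one has P_ℓ(x) · P_r(x) = P_{ℓ+r}(x), where P_m are the idivided-power polynomials at v. (This is the identity B_i^{[ℓ]} B_i^{[r]} = B_i^{[ℓ+r]} for 0 ≤ r ≤ ℓ established in the proof of Proposition 7.5 of the paper, in the split rank-one iquantum group at v, where B_i generates a free polynomial algebra and B_i^{[m]} = P_m(B_i).) -/

import Mathlib

open Polynomial

/-- The quantum integer `[m]_q = (q^m - q^{-m})/(q - q^{-1})`. -/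
noncomputable def qInt (q : ℂ) (m : ℕ) : ℂ := (q ^ m - q⁻¹ ^ m) / (q - q⁻¹)

/-- The idivided-power polynomials at `v`:
`P_{2k}(x) = ∏_{r=1}^{k} (x² + (v - v⁻¹)² [2r-1]_v²)` and
`P_{2k+1}(x) = x ∏_{r=1}^{k} (x² + (v - v⁻¹)² [2r]_v²)`. -/
noncomputable def iDP (v : ℂ) (m : ℕ) : Polynomial ℂ :=
  if m % 2 = 0 then
    ∏ r ∈ Finset.range (m / 2), (X ^ 2 + C ((v - v⁻¹) ^ 2 * qInt v (2 * r + 1) ^ 2))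
  else
    X * ∏ r ∈ Finset.range (m / 2), (X ^ 2 + C ((v - v⁻¹) ^ 2 * qInt v (2 * r + 2) ^ 2))

lemma qInt_period (v : ℂ) (ℓ m : ℕ) (h : v ^ ℓ = 1) : qInt v (ℓ + m) = qInt v m := by
  have h2 : v⁻¹ ^ ℓ = 1 := by rw [inv_pow, h, inv_one]
  unfold qInt
  rw [pow_add, pow_add, h, h2, one_mul, one_mul]

lemma qInt_sub (v : ℂ) (hv0 : v ≠ 0) (ℓ m : ℕ) (hm : m ≤ ℓ) (h : v ^ ℓ = 1) :
    qInt v (ℓ - m) = - qInt v m := by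
  have h2 : v⁻¹ ^ ℓ = 1 := by rw [inv_pow, h, inv_one]
  have hv0' : v⁻¹ ≠ 0 := inv_ne_zero hv0
  have e1 : v ^ (ℓ - m) = v⁻¹ ^ m := by
    rw [pow_sub₀ v hv0 hm, h, inv_pow]
    field_simp
  have e2 : v⁻¹ ^ (ℓ - m) = v ^ m := by
    rw [pow_sub₀ v⁻¹ hv0' hm, h2, inv_pow, inv_inv]
    field_simp
  unfold qInt
  rw [e1, e2, ← neg_div]
  ring_nf

lemma qInt_self (v : ℂ) (ℓ : ℕ) (h : v ^ ℓ = 1) : qInt v ℓ = 0 := by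
  have h2 : v⁻¹ ^ ℓ = 1 := by rw [inv_pow, h, inv_one]
  unfold qInt
  rw [h, h2, sub_self, zero_div]

/-- The identity `B_i^{[ℓ]} B_i^{[r]} = B_i^{[ℓ+r]}` for `0 ≤ r ≤ ℓ` from the proof of
Proposition 7.5 of the paper: for an odd `ℓ ≥ 3`, a primitive `ℓ`-th root of unity `v`,
and `0 ≤ r ≤ ℓ`, one has `P_ℓ · P_r = P_{ℓ+r}` in `ℂ[x]`. -/
theorem iDP_ell_mul (ℓ : ℕ) (hodd : Odd ℓ) (hl : 3 ≤ ℓ) (v : ℂ)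
    (hv : IsPrimitiveRoot v ℓ) (r : ℕ) (hr : r ≤ ℓ) :
    iDP v ℓ * iDP v r = iDP v (ℓ + r) := by
  obtain ⟨k, hk⟩ := hodd
  subst hk
  have hvℓ : v ^ (2 * k + 1) = 1 := hv.pow_eq_one
  have hv0 : v ≠ 0 := by
    intro h0
    rw [h0, zero_pow (by omega)] at hvℓ
    exact zero_ne_one hvℓ
  have hA : ∀ m : ℕ, (X ^ 2 + C ((v - v⁻¹) ^ 2 * qInt v ((2*k+1) + m) ^ 2) : Polynomial ℂ)
      = X ^ 2 + C ((v - v⁻¹) ^ 2 * qInt v m ^ 2) := by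
    intro m; rw [qInt_period v _ m hvℓ]
  rcases Nat.even_or_odd r with ⟨s, hs⟩ | ⟨s, hs⟩
  · -- r = 2s even
    subst hs
    have h1 : (2 * k + 1) % 2 = 1 := by omega
    have h2 : (s + s) % 2 = 0 := by omega
    have h3 : (2 * k + 1 + (s + s)) % 2 = 1 := by omega
    have h4 : (2 * k + 1) / 2 = k := by omega
    have h5 : (s + s) / 2 = s := by omega
    have h6 : (2 * k + 1 + (s + s)) / 2 = k + s := by omega
    simp only [iDP, h1, h2, h3, h4, h5, h6, Nat.reduceEqDiff, reduceIte]
    rw [mul_assoc, Finset.prod_range_add]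
    refine congrArg (fun t => X * t) (congrArg (fun t => _ * t) ?_)
    apply Finset.prod_congr rfl
    intro j _
    have : 2 * (k + j) + 2 = (2 * k + 1) + (2 * j + 1) := by ring
    rw [this, hA]
  · -- r = 2s+1 odd
    subst hs
    have hsk : s ≤ k := by omega
    have h1 : (2 * k + 1) % 2 = 1 := by omega
    have h2 : (2 * s + 1) % 2 = 1 := by omega
    have h3 : (2 * k + 1 + (2 * s + 1)) % 2 = 0 := by omega
    have h4 : (2 * k + 1) / 2 = k := by omega
    have h5 : (2 * s + 1) / 2 = s := by omega
    have h6 : (2 * k + 1 + (2 * s + 1)) / 2 = k + (s + 1) := by omega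
    simp only [iDP, h1, h2, h3, h4, h5, h6, Nat.reduceEqDiff, reduceIte]
    rw [Finset.prod_range_add, Finset.prod_range_succ']
    have hzero : (X ^ 2 + C ((v - v⁻¹) ^ 2 * qInt v (2 * (k + 0) + 1) ^ 2) : Polynomial ℂ)
        = X ^ 2 := by
      have : 2 * (k + 0) + 1 = 2 * k + 1 := by ring
      rw [this, qInt_self v _ hvℓ]
      norm_num
    rw [hzero]
    have hshift : ∀ j ∈ Finset.range s,
        (X ^ 2 + C ((v - v⁻¹) ^ 2 * qInt v (2 * (k + (j + 1)) + 1) ^ 2) : Polynomial ℂ)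
        = X ^ 2 + C ((v - v⁻¹) ^ 2 * qInt v (2 * j + 2) ^ 2) := by
      intro j _
      have : 2 * (k + (j + 1)) + 1 = (2 * k + 1) + (2 * j + 2) := by ring
      rw [this, hA]
    rw [Finset.prod_congr rfl hshift]
    have hrefl : (∏ j ∈ Finset.range k,
        (X ^ 2 + C ((v - v⁻¹) ^ 2 * qInt v (2 * j + 2) ^ 2) : Polynomial ℂ))
        = ∏ j ∈ Finset.range k, (X ^ 2 + C ((v - v⁻¹) ^ 2 * qInt v (2 * j + 1) ^ 2)) := by
      rw [← Finset.prod_range_reflect (fun j => (X ^ 2 + C ((v - v⁻¹) ^ 2 * qInt v (2 * j + 1) ^ 2) : Polynomial ℂ)) k]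
      apply Finset.prod_congr rfl
      intro j hj
      simp only [Finset.mem_range] at hj
      have hle : 2 * j + 2 ≤ 2 * k + 1 := by omega
      have heq : 2 * (k - 1 - j) + 1 = (2 * k + 1) - (2 * j + 2) := by omega
      rw [heq, qInt_sub v hv0 _ _ hle hvℓ, neg_sq]
    rw [hrefl]
    ring
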